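/- arXiv:2101.12493 — 2 statements merged into one kernel-verified Lean document; each statement's English description precedes it below -/
import Mathlib

section
/- Let X₁ and X₂ be independent real random variables with X₁ exponentially distributed with rate λ₁ > 0 and X₂ exponentially distributed with rate λ₂ > 0, and let α ∈ (0,1) and σ² > 0. Then P(X₁ ≤ α(X₂ + σ²) and X₂ ≤ α(X₁ + σ²)) = 1 − (λ₂/(λ₂ + αλ₁))·exp(−αλ₁σ²) − (λ₁/(λ₁ + αλ₂))·exp(−αλ₂σ²) + (λ₁/(λ₁ + αλ₂) + λ₂/(λ₂ + αλ₁) − 1)·exp(−(λ₁ + λ₂)·ασ²/(1−α)). -/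
open MeasureTheory ProbabilityTheory Real
open scoped ENNReal

section StmtAux
open Set


lemma my_integral_exp_Ioi {b : ℝ} (hb : 0 < b) (a : ℝ) :
    ∫ x in Set.Ioi a, rexp (-(b * x)) = rexp (-(b * a)) / b := by
  have hderiv : ∀ x ∈ Set.Ici a, HasDerivAt (fun y => -rexp (-(b * y)) / b) (rexp (-(b * x))) x := by
    intro x _
    have := (hasDerivAt_neg_exp_mul_exp (r := b) (x := x)).div_const b
    simpa [mul_div_assoc, mul_div_cancel_left₀ _ hb.ne'] using this
  have hint : IntegrableOn (fun x => rexp (-(b * x))) (Set.Ioi a) := by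
    simpa [neg_mul] using exp_neg_integrableOn_Ioi a hb
  have htend : Filter.Tendsto (fun y => -rexp (-(b * y)) / b) Filter.atTop (nhds 0) := by
    have h1 : Filter.Tendsto (fun y : ℝ => rexp (-(b * y))) Filter.atTop (nhds 0) := by
      have hb' : Filter.Tendsto (fun y : ℝ => b * y) Filter.atTop Filter.atTop :=
        Filter.Tendsto.const_mul_atTop hb Filter.tendsto_id
      exact Real.tendsto_exp_neg_atTop_nhds_zero.comp hb'
    simpa using (h1.neg.div_const b)
  have := integral_Ioi_of_hasDerivAt_of_tendsto' hderiv hint htend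
  rw [this]; ring

lemma expMeasure_Iic_eq {r : ℝ} (hr : 0 < r) (t : ℝ) :
    expMeasure r (Set.Iic t) = ENNReal.ofReal (if 0 ≤ t then 1 - rexp (-(r * t)) else 0) := by
  rw [show expMeasure r = volume.withDensity (exponentialPDF r) from rfl,
    withDensity_apply _ measurableSet_Iic]
  exact lintegral_exponentialPDF_eq_antiDeriv hr t

lemma expMeasure_Ioi_eq {r : ℝ} (hr : 0 < r) {t : ℝ} (ht : 0 ≤ t) :
    expMeasure r (Set.Ioi t) = ENNReal.ofReal (rexp (-(r * t))) := by
  haveI := isProbabilityMeasure_expMeasure hr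
  have h1 : Set.Ioi t = (Set.Iic t)ᶜ := by simp
  have he : rexp (-(r * t)) ≤ 1 := by
    rw [Real.exp_le_one_iff]; nlinarith
  rw [h1, measure_compl measurableSet_Iic (measure_ne_top _ _), measure_univ,
    expMeasure_Iic_eq hr, if_pos ht, ← ENNReal.ofReal_one, ← ENNReal.ofReal_sub _ (by nlinarith)]
  norm_num

lemma expMeasure_singleton {r : ℝ} (v : ℝ) : expMeasure r {v} = 0 := by
  rw [show expMeasure r = volume.withDensity (exponentialPDF r) from rfl]
  exact (withDensity_absolutelyContinuous volume _) (measure_singleton v)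

lemma expMeasure_Ioo_eq {r : ℝ} (hr : 0 < r) {u v : ℝ} (hu : 0 ≤ u) (huv : u ≤ v) :
    expMeasure r (Set.Ioo u v) = ENNReal.ofReal (rexp (-(r * u)) - rexp (-(r * v))) := by
  haveI := isProbabilityMeasure_expMeasure hr
  rcases eq_or_lt_of_le huv with rfl | hlt
  · simp
  have hIoc : expMeasure r (Set.Ioo u v) = expMeasure r (Set.Ioc u v) := by
    refine le_antisymm (measure_mono Set.Ioo_subset_Ioc_self) ?_
    rw [← Set.Ioo_union_right hlt]
    refine le_trans (measure_union_le _ _) ?_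
    rw [expMeasure_singleton]; simp
  have hdiff : Set.Ioc u v = Set.Ioi u \ Set.Ioi v := (Set.Ioi_diff_Ioi).symm
  rw [hIoc, hdiff, measure_diff (Set.Ioi_subset_Ioi huv) measurableSet_Ioi.nullMeasurableSet
      (measure_ne_top _ _), expMeasure_Ioi_eq hr hu, expMeasure_Ioi_eq hr (le_trans hu huv),
    ← ENNReal.ofReal_sub _ (Real.exp_nonneg _)]


lemma lintegral_expMeasure {r : ℝ} (hr : 0 < r) (g : ℝ → ℝ≥0∞) :
    ∫⁻ x, g x ∂(expMeasure r)
      = ∫⁻ x in Set.Ioi 0, ENNReal.ofReal (r * rexp (-(r * x))) * g x := by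
  rw [show expMeasure r = volume.withDensity (exponentialPDF r) from rfl,
    lintegral_withDensity_eq_lintegral_mul_non_measurable volume
      (show Measurable (exponentialPDF r) from (measurable_exponentialPDFReal r).ennreal_ofReal)
      (Filter.Eventually.of_forall fun x => ENNReal.ofReal_lt_top)]
  rw [← lintegral_indicator measurableSet_Ioi]
  refine lintegral_congr_ae ?_
  have h0 : ∀ᵐ x : ℝ, x ≠ 0 := by
    have : (volume : Measure ℝ) {(0:ℝ)} = 0 := measure_singleton 0
    exact compl_mem_ae_iff.mpr this
  filter_upwards [h0] with x hx
  rcases lt_or_gt_of_ne hx with hneg | hpos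
  · simp [Set.indicator_of_notMem (by simpa using hneg.le : x ∉ Set.Ioi (0:ℝ)),
      exponentialPDF_of_neg hneg]
  · simp [Set.indicator_of_mem (by simpa using hpos : x ∈ Set.Ioi (0:ℝ)),
      exponentialPDF_of_nonneg hpos.le]

lemma lintegral_ofReal_exp {c k : ℝ} (hc : 0 ≤ c) (hk : 0 < k) (a : ℝ) :
    ∫⁻ y in Set.Ioi a, ENNReal.ofReal (c * rexp (-(k * y)))
      = ENNReal.ofReal (c * (rexp (-(k * a)) / k)) := by
  rw [← ofReal_integral_eq_lintegral_ofReal]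
  · rw [integral_const_mul, my_integral_exp_Ioi hk]
  · have := (exp_neg_integrableOn_Ioi a hk).const_mul c
    simpa [neg_mul] using this
  · exact ae_of_all _ fun y => by positivity


lemma prob_onesided {l1 l2 α σ2 : ℝ} (hl1 : 0 < l1) (hl2 : 0 < l2) (hα : 0 < α)
    (hσ2 : 0 < σ2) :
    ∫⁻ y, expMeasure l1 (Set.Ioi (α * (y + σ2))) ∂(expMeasure l2)
      = ENNReal.ofReal (l2 / (l2 + α * l1) * rexp (-(α * l1 * σ2))) := by
  rw [lintegral_expMeasure hl2]
  have hcongr : ∀ y ∈ Set.Ioi (0:ℝ),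
      ENNReal.ofReal (l2 * rexp (-(l2 * y))) * expMeasure l1 (Set.Ioi (α * (y + σ2)))
        = ENNReal.ofReal ((l2 * rexp (-(l1 * (α * σ2)))) * rexp (-((l2 + l1 * α) * y))) := by
    intro y hy
    rw [expMeasure_Ioi_eq hl1 (by nlinarith [Set.mem_Ioi.mp hy] : (0:ℝ) ≤ α * (y + σ2)),
      ← ENNReal.ofReal_mul (by positivity)]
    congr 1
    rw [mul_assoc, ← Real.exp_add, mul_assoc, ← Real.exp_add]
    congr 2
    ring
  rw [setLIntegral_congr_fun_ae measurableSet_Ioi (ae_of_all _ hcongr),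
    lintegral_ofReal_exp (by positivity) (by positivity)]
  congr 1
  rw [mul_zero, neg_zero, Real.exp_zero]
  rw [show -(l1 * (α * σ2)) = -(α * l1 * σ2) by ring]
  field_simp


lemma prob_both {l1 l2 α σ2 : ℝ} (hl1 : 0 < l1) (hl2 : 0 < l2) (hα : 0 < α) (hα1 : α < 1)
    (hσ2 : 0 < σ2) :
    ∫⁻ y, expMeasure l1 (Set.Ioo (α * (y + σ2)) (y / α - σ2)) ∂(expMeasure l2)
      = ENNReal.ofReal ((l1 / (l1 + α * l2) + l2 / (l2 + α * l1) - 1)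
          * rexp (-(l1 + l2) * (α * σ2 / (1 - α)))) := by
  have h1α : 0 < 1 - α := by linarith
  set t0 : ℝ := α * σ2 / (1 - α) with ht0def
  have ht0 : 0 < t0 := by positivity
  set k1 : ℝ := l2 + l1 * α with hk1def
  set k2 : ℝ := l2 + l1 / α with hk2def
  have hk1 : 0 < k1 := by positivity
  have hk2 : 0 < k2 := by positivity
  set C1 : ℝ := l2 * rexp (-(l1 * (α * σ2))) with hC1def
  set C2 : ℝ := l2 * rexp (l1 * σ2) with hC2def
  set F : ℝ → ℝ := fun y => l2 * rexp (-(l2 * y)) *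
      (rexp (-(l1 * (α * (y + σ2)))) - rexp (-(l1 * (y / α - σ2)))) with hFdef
  have hfun : ∀ y : ℝ, F y = C1 * rexp (-(k1 * y)) - C2 * rexp (-(k2 * y)) := by
    intro y
    have e1 : rexp (-(l2 * y)) * rexp (-(l1 * (α * (y + σ2))))
        = rexp (-(l1 * (α * σ2))) * rexp (-(k1 * y)) := by
      rw [← Real.exp_add, ← Real.exp_add]; congr 1; rw [hk1def]; ring
    have e2 : rexp (-(l2 * y)) * rexp (-(l1 * (y / α - σ2)))
        = rexp (l1 * σ2) * rexp (-(k2 * y)) := by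
      rw [← Real.exp_add, ← Real.exp_add]; congr 1; rw [hk2def]; field_simp; ring
    rw [hFdef, hC1def, hC2def]
    calc l2 * rexp (-(l2 * y)) *
        (rexp (-(l1 * (α * (y + σ2)))) - rexp (-(l1 * (y / α - σ2))))
        = l2 * (rexp (-(l2 * y)) * rexp (-(l1 * (α * (y + σ2)))))
          - l2 * (rexp (-(l2 * y)) * rexp (-(l1 * (y / α - σ2)))) := by ring
      _ = _ := by rw [e1, e2]; ring
  rw [lintegral_expMeasure hl2, ← Set.Ioc_union_Ioi_eq_Ioi ht0.le,
    lintegral_union measurableSet_Ioi (Set.Ioc_disjoint_Ioi le_rfl)]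
  have hzero : ∀ y ∈ Set.Ioc (0:ℝ) t0,
      ENNReal.ofReal (l2 * rexp (-(l2 * y)))
        * expMeasure l1 (Set.Ioo (α * (y + σ2)) (y / α - σ2)) = 0 := by
    intro y hy
    obtain ⟨hy0, hyt⟩ := hy
    have h2 : y * (1 - α) ≤ α * σ2 := by
      rw [ht0def] at hyt
      exact (le_div_iff₀ h1α).mp hyt
    have h1 : ¬ (α * (y + σ2) < y / α - σ2) := by
      rw [not_lt, sub_le_iff_le_add, div_le_iff₀ hα]
      nlinarith [mul_le_mul_of_nonneg_left h2 (by linarith : (0:ℝ) ≤ 1 + α)]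
    rw [Set.Ioo_eq_empty h1, measure_empty, mul_zero]
  rw [setLIntegral_congr_fun_ae measurableSet_Ioc (ae_of_all _ hzero), lintegral_zero, zero_add]
  have hcongr2 : ∀ y ∈ Set.Ioi t0,
      ENNReal.ofReal (l2 * rexp (-(l2 * y)))
        * expMeasure l1 (Set.Ioo (α * (y + σ2)) (y / α - σ2))
        = ENNReal.ofReal (F y) := by
    intro y hy
    have hyt : t0 < y := hy
    have hy0 : 0 < y := lt_trans ht0 hyt
    have h2 : α * σ2 ≤ y * (1 - α) := by
      rw [ht0def] at hyt
      exact (div_le_iff₀ h1α).mp hyt.le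
    have hu : (0:ℝ) ≤ α * (y + σ2) := by nlinarith
    have huv : α * (y + σ2) ≤ y / α - σ2 := by
      rw [le_sub_iff_add_le, le_div_iff₀ hα]
      nlinarith [mul_le_mul_of_nonneg_left h2 (by linarith : (0:ℝ) ≤ 1 + α)]
    rw [expMeasure_Ioo_eq hl1 hu huv, ← ENNReal.ofReal_mul (by positivity), hFdef]
  rw [setLIntegral_congr_fun_ae measurableSet_Ioi (ae_of_all _ hcongr2)]
  have hint1 : IntegrableOn (fun y => C1 * rexp (-(k1 * y))) (Set.Ioi t0) := by
    have := (exp_neg_integrableOn_Ioi t0 hk1).const_mul C1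
    simpa [neg_mul, IntegrableOn] using this
  have hint2 : IntegrableOn (fun y => C2 * rexp (-(k2 * y))) (Set.Ioi t0) := by
    have := (exp_neg_integrableOn_Ioi t0 hk2).const_mul C2
    simpa [neg_mul, IntegrableOn] using this
  have hFeq : F = fun y => C1 * rexp (-(k1 * y)) - C2 * rexp (-(k2 * y)) := funext hfun
  have hint : IntegrableOn F (Set.Ioi t0) := by
    rw [hFeq]; exact hint1.sub hint2
  have hnn : 0 ≤ᵐ[(volume : Measure ℝ).restrict (Set.Ioi t0)] F := by
    refine ae_restrict_of_forall_mem measurableSet_Ioi fun y hy => ?_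
    have hyt : t0 < y := hy
    have hy0 : 0 < y := lt_trans ht0 hyt
    have h2 : α * σ2 ≤ y * (1 - α) := by
      rw [ht0def] at hyt
      exact (div_le_iff₀ h1α).mp hyt.le
    have huv : α * (y + σ2) ≤ y / α - σ2 := by
      rw [le_sub_iff_add_le, le_div_iff₀ hα]
      nlinarith [mul_le_mul_of_nonneg_left h2 (by linarith : (0:ℝ) ≤ 1 + α)]
    have hee : rexp (-(l1 * (y / α - σ2))) ≤ rexp (-(l1 * (α * (y + σ2)))) := by
      apply Real.exp_le_exp.mpr; nlinarith
    have h3 : (0:ℝ) ≤ l2 * rexp (-(l2 * y)) := by positivity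
    exact mul_nonneg h3 (sub_nonneg.mpr hee)
  rw [← ofReal_integral_eq_lintegral_ofReal hint hnn]
  have hI : ∫ y in Set.Ioi t0, F y
      = C1 * (rexp (-(k1 * t0)) / k1) - C2 * (rexp (-(k2 * t0)) / k2) := by
    rw [hFeq, integral_sub hint1 hint2, integral_const_mul, integral_const_mul,
      my_integral_exp_Ioi hk1, my_integral_exp_Ioi hk2]
  rw [hI]
  congr 1
  have hT1 : rexp (-(l1 * (α * σ2))) * rexp (-(k1 * t0))
      = rexp (-(l1 + l2) * (α * σ2 / (1 - α))) := by
    rw [← Real.exp_add]; congr 1; rw [hk1def, ht0def]; field_simp; ring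
  have hT2 : rexp (l1 * σ2) * rexp (-(k2 * t0))
      = rexp (-(l1 + l2) * (α * σ2 / (1 - α))) := by
    rw [← Real.exp_add]; congr 1; rw [hk2def, ht0def]; field_simp; ring
  have hco : l2 / k1 - l2 / k2 = l1 / (l1 + α * l2) + l2 / (l2 + α * l1) - 1 := by
    rw [hk1def, hk2def]
    have h1 : l1 + α * l2 ≠ 0 := by positivity
    have h2 : l2 + α * l1 ≠ 0 := by positivity
    field_simp
    ring
  calc C1 * (rexp (-(k1 * t0)) / k1) - C2 * (rexp (-(k2 * t0)) / k2)
      = l2 / k1 * (rexp (-(l1 * (α * σ2))) * rexp (-(k1 * t0)))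
        - l2 / k2 * (rexp (l1 * σ2) * rexp (-(k2 * t0))) := by
        rw [hC1def, hC2def]; ring
    _ = (l2 / k1 - l2 / k2) * rexp (-(l1 + l2) * (α * σ2 / (1 - α))) := by
        rw [hT1, hT2]; ring
    _ = _ := by rw [hco]

end StmtAux

/-- For independent `X₁ ~ Exp(λ₁)`, `X₂ ~ Exp(λ₂)`, `α ∈ (0,1)` and
`σ² > 0`, the probability that neither packet is received is
`P(X₁ ≤ α(X₂+σ²) ∧ X₂ ≤ α(X₁+σ²)) = 1 − (λ₂/(λ₂+αλ₁))·exp(−αλ₁σ²)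
  − (λ₁/(λ₁+αλ₂))·exp(−αλ₂σ²)
  + (λ₁/(λ₁+αλ₂) + λ₂/(λ₂+αλ₁) − 1)·exp(−(λ₁+λ₂)·ασ²/(1−α))`. -/
theorem stmt_11 {Ω : Type*} [MeasureTheory.MeasureSpace Ω]
    (μ : Measure Ω) [IsProbabilityMeasure μ]
    (X1 X2 : Ω → ℝ) (hX1m : Measurable X1) (hX2m : Measurable X2)
    (l1 l2 : ℝ) (hl1 : 0 < l1) (hl2 : 0 < l2)
    (hX1 : Measure.map X1 μ = expMeasure l1)
    (hX2 : Measure.map X2 μ = expMeasure l2)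
    (hindep : IndepFun X1 X2 μ)
    (α σ2 : ℝ) (hα : α ∈ Set.Ioo (0:ℝ) 1) (hσ2 : 0 < σ2) :
    μ {ω | X1 ω ≤ α * (X2 ω + σ2) ∧ X2 ω ≤ α * (X1 ω + σ2)}
      = ENNReal.ofReal
          (1 - l2 / (l2 + α * l1) * rexp (-(α * l1 * σ2))
             - l1 / (l1 + α * l2) * rexp (-(α * l2 * σ2))
             + (l1 / (l1 + α * l2) + l2 / (l2 + α * l1) - 1)
               * rexp (-(l1 + l2) * (α * σ2 / (1 - α)))) := by
  obtain ⟨hα0, hα1⟩ := hα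
  haveI i1 : IsProbabilityMeasure (expMeasure l1) := isProbabilityMeasure_expMeasure hl1
  haveI i2 : IsProbabilityMeasure (expMeasure l2) := isProbabilityMeasure_expMeasure hl2
  set pm : Measure (ℝ × ℝ) := (expMeasure l1).prod (expMeasure l2) with hpmdef
  set S : Set (ℝ × ℝ) := {p | p.1 ≤ α * (p.2 + σ2) ∧ p.2 ≤ α * (p.1 + σ2)} with hSdef
  set A : Set (ℝ × ℝ) := {p | α * (p.2 + σ2) < p.1} with hAdef
  set B : Set (ℝ × ℝ) := {p | α * (p.1 + σ2) < p.2} with hBdef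
  have hmA : MeasurableSet A :=
    measurableSet_lt ((measurable_snd.add_const σ2).const_mul α) measurable_fst
  have hmB : MeasurableSet B :=
    measurableSet_lt ((measurable_fst.add_const σ2).const_mul α) measurable_snd
  have hmS : MeasurableSet S :=
    (measurableSet_le measurable_fst ((measurable_snd.add_const σ2).const_mul α)).inter
      (measurableSet_le measurable_snd ((measurable_fst.add_const σ2).const_mul α))
  have hmap : μ.map (fun ω => (X1 ω, X2 ω)) = pm := by
    rw [hpmdef, ← hX1, ← hX2]
    exact (indepFun_iff_map_prod_eq_prod_map_map hX1m.aemeasurable hX2m.aemeasurable).mp hindep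
  have hμS : μ {ω | X1 ω ≤ α * (X2 ω + σ2) ∧ X2 ω ≤ α * (X1 ω + σ2)} = pm S := by
    rw [← hmap, Measure.map_apply (hX1m.prodMk hX2m) hmS]
    rfl
  -- the three probabilities
  set a : ℝ := l2 / (l2 + α * l1) * rexp (-(α * l1 * σ2)) with hadef
  set b : ℝ := l1 / (l1 + α * l2) * rexp (-(α * l2 * σ2)) with hbdef
  set c : ℝ := (l1 / (l1 + α * l2) + l2 / (l2 + α * l1) - 1)
      * rexp (-(l1 + l2) * (α * σ2 / (1 - α))) with hcdef
  have ha0 : 0 ≤ a := by rw [hadef]; positivity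
  have hb0 : 0 ≤ b := by rw [hbdef]; positivity
  have hc0 : 0 ≤ c := by
    rw [hcdef]
    have hden1 : (0:ℝ) < l1 + α * l2 := by positivity
    have hden2 : (0:ℝ) < l2 + α * l1 := by positivity
    have hco : l1 / (l1 + α * l2) + l2 / (l2 + α * l1) - 1
        = (l1 * l2 * (1 - α) * (1 + α)) / ((l1 + α * l2) * (l2 + α * l1)) := by
      field_simp
      ring
    rw [hco]
    have h1α : (0:ℝ) < 1 - α := by linarith
    have h2α : (0:ℝ) < 1 + α := by linarith
    positivity
  have hA : pm A = ENNReal.ofReal a := by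
    rw [hpmdef, Measure.prod_apply_symm hmA]
    have hpre : ∀ y : ℝ, ((fun x => (x, y)) ⁻¹' A) = Set.Ioi (α * (y + σ2)) := by
      intro y; ext x; simp [hAdef, Set.mem_Ioi]
    simp_rw [hpre]
    exact prob_onesided hl1 hl2 hα0 hσ2
  have hB : pm B = ENNReal.ofReal b := by
    rw [hpmdef, Measure.prod_apply hmB]
    have hpre : ∀ x : ℝ, (Prod.mk x ⁻¹' B) = Set.Ioi (α * (x + σ2)) := by
      intro x; ext y; simp [hBdef, Set.mem_Ioi]
    simp_rw [hpre]
    exact prob_onesided hl2 hl1 hα0 hσ2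
  have hAB : pm (A ∩ B) = ENNReal.ofReal c := by
    rw [hpmdef, Measure.prod_apply_symm (hmA.inter hmB)]
    have hpre : ∀ y : ℝ, ((fun x => (x, y)) ⁻¹' (A ∩ B))
        = Set.Ioo (α * (y + σ2)) (y / α - σ2) := by
      intro y; ext x
      simp only [hAdef, hBdef, Set.mem_preimage, Set.mem_inter_iff, Set.mem_setOf_eq,
        Set.mem_Ioo]
      refine and_congr_right fun _ => ?_
      rw [lt_sub_iff_add_lt, lt_div_iff₀ hα0, mul_comm]
    simp_rw [hpre]
    exact prob_both hl1 hl2 hα0 hα1 hσ2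
  have key : pm (A ∪ B) = ENNReal.ofReal (a + b - c) := by
    have h := measure_union_add_inter (μ := pm) A hmB
    rw [hA, hB, hAB, ← ENNReal.ofReal_add ha0 hb0] at h
    have := ENNReal.eq_sub_of_add_eq ENNReal.ofReal_ne_top h
    rw [this]
    exact (ENNReal.ofReal_sub _ hc0).symm
  have habc : c ≤ a + b := by
    have h := measure_union_add_inter (μ := pm) A hmB
    rw [hA, hB, hAB, ← ENNReal.ofReal_add ha0 hb0] at h
    have hle : ENNReal.ofReal c ≤ ENNReal.ofReal (a + b) := h ▸ le_add_self
    exact (ENNReal.ofReal_le_ofReal_iff (by positivity)).mp hle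
  have hub : a + b - c ≤ 1 := by
    have hle : pm (A ∪ B) ≤ 1 := prob_le_one
    rw [key] at hle
    exact ENNReal.ofReal_le_one.mp hle
  have hScompl : S = (A ∪ B)ᶜ := by
    ext p
    simp only [hSdef, hAdef, hBdef, Set.mem_setOf_eq, Set.mem_compl_iff, Set.mem_union,
      not_or, not_lt]

  rw [hμS, hScompl, measure_compl (hmA.union hmB) (measure_ne_top _ _), measure_univ, key,
    ← ENNReal.ofReal_one, ← ENNReal.ofReal_sub _ (by linarith : (0:ℝ) ≤ a + b - c)]
  congr 1
  rw [hadef, hbdef, hcdef]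
  ring
end

section
/- Let X₁ and X₂ be independent real random variables with X₁ exponentially distributed with rate λ₁ > 0 and X₂ exponentially distributed with rate λ₂ > 0, and let α > 0 and σ² > 0. Then P(X₁ ≥ X₂ and X₁ > α(X₂ + σ²) and X₂ ≤ ασ²) = (λ₂/(λ₂ + αλ₁))·exp(−ασ²λ₁)·(1 − exp(−ασ²(λ₂ + αλ₁))). -/
open MeasureTheory ProbabilityTheory Real

open Set

lemma expMeasure_Iic {r : ℝ} (hr : 0 < r) (t : ℝ) :
    expMeasure r (Iic t) = ENNReal.ofReal (if 0 ≤ t then 1 - rexp (-(r * t)) else 0) := by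
  rw [expMeasure, gammaMeasure, withDensity_apply _ measurableSet_Iic]
  exact lintegral_exponentialPDF_eq_antiDeriv hr t

lemma expMeasure_Ioi {r : ℝ} (hr : 0 < r) {t : ℝ} (ht : 0 ≤ t) :
    expMeasure r (Ioi t) = ENNReal.ofReal (rexp (-(r * t))) := by
  have : IsProbabilityMeasure (expMeasure r) := isProbabilityMeasure_expMeasure hr
  have h1 : Ioi t = (Iic t)ᶜ := by simp [compl_Iic]
  rw [h1, measure_compl measurableSet_Iic (measure_ne_top _ _), expMeasure_Iic hr,
    if_pos ht, measure_univ]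
  rw [ENNReal.sub_eq_of_eq_add (by simp)]
  rw [← ENNReal.ofReal_one, ← ENNReal.ofReal_add (exp_nonneg _)]
  · norm_num
  · have : rexp (-(r*t)) ≤ 1 := exp_le_one_iff.2 (neg_nonpos.2 (mul_nonneg hr.le ht))
    linarith

lemma integral_exp_neg_mul {c T : ℝ} (hc : 0 < c) :
    ∫ y in (0:ℝ)..T, rexp (-(c * y)) = (1 - rexp (-(c * T))) / c := by
  have h : ∀ y : ℝ, rexp (-(c * y)) = rexp (-c * y) := by intro y; ring_nf
  simp_rw [h]
  rw [intervalIntegral.integral_comp_mul_left (fun x => rexp x) (by linarith : (-c) ≠ 0)]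
  rw [integral_exp]
  field_simp
  ring_nf
  rw [mul_comm c (rexp (-(c*T))), mul_assoc, mul_inv_cancel₀ hc.ne', mul_one]
  rw [Real.exp_zero, mul_one, mul_inv_cancel₀ hc.ne']
  ring

/-- For independent `X₁ ~ Exp(λ₁)`, `X₂ ~ Exp(λ₂)`, `α > 0` and
`σ² > 0`, the SIC joint probability that only sensor 1's packet is received with
`X₁ ≥ X₂` is
`P(X₁ ≥ X₂ ∧ X₁ > α(X₂+σ²) ∧ X₂ ≤ ασ²)
  = (λ₂/(λ₂+αλ₁))·exp(−ασ²λ₁)·(1 − exp(−ασ²(λ₂+αλ₁)))`. -/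
theorem stmt_12 {Ω : Type*} [MeasureTheory.MeasureSpace Ω]
    (μ : Measure Ω) [IsProbabilityMeasure μ]
    (X1 X2 : Ω → ℝ) (hX1m : Measurable X1) (hX2m : Measurable X2)
    (l1 l2 : ℝ) (hl1 : 0 < l1) (hl2 : 0 < l2)
    (hX1 : Measure.map X1 μ = expMeasure l1)
    (hX2 : Measure.map X2 μ = expMeasure l2)
    (hindep : IndepFun X1 X2 μ)
    (α σ2 : ℝ) (hα : 0 < α) (hσ2 : 0 < σ2) :
    μ {ω | X2 ω ≤ X1 ω ∧ X1 ω > α * (X2 ω + σ2) ∧ X2 ω ≤ α * σ2}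
      = ENNReal.ofReal
          (l2 / (l2 + α * l1) * rexp (-(α * σ2 * l1))
            * (1 - rexp (-(α * σ2 * (l2 + α * l1))))) := by
  have hP1 : IsProbabilityMeasure (expMeasure l1) := isProbabilityMeasure_expMeasure hl1
  have hP2 : IsProbabilityMeasure (expMeasure l2) := isProbabilityMeasure_expMeasure hl2
  have hc : 0 < l2 + α * l1 := by positivity
  set S : Set (ℝ × ℝ) := {p | p.2 ≤ p.1 ∧ α * (p.2 + σ2) < p.1 ∧ p.2 ≤ α * σ2} with hSdef
  have hSm : MeasurableSet S := by
    apply MeasurableSet.inter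
    · exact measurableSet_le measurable_snd measurable_fst
    apply MeasurableSet.inter
    · exact measurableSet_lt (by fun_prop) measurable_fst
    · exact measurableSet_le measurable_snd measurable_const
  have hmap : Measure.map (fun ω => (X1 ω, X2 ω)) μ = (expMeasure l1).prod (expMeasure l2) := by
    rw [← hX1, ← hX2]
    exact (indepFun_iff_map_prod_eq_prod_map_map hX1m.aemeasurable hX2m.aemeasurable).mp hindep
  have h0 : μ {ω | X2 ω ≤ X1 ω ∧ X1 ω > α * (X2 ω + σ2) ∧ X2 ω ≤ α * σ2}
      = ((expMeasure l1).prod (expMeasure l2)) S := by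
    rw [← hmap, Measure.map_apply (hX1m.prodMk hX2m) hSm]
    rfl
  rw [h0, Measure.prod_apply_symm hSm]
  have hmeas : Measurable fun y => expMeasure l1 ((fun x => (x, y)) ⁻¹' S) :=
    measurable_measure_prodMk_right hSm
  rw [show expMeasure l2 = volume.withDensity (exponentialPDF l2) from rfl,
    lintegral_withDensity_eq_lintegral_mul volume
      (show Measurable (exponentialPDF l2) from (measurable_exponentialPDFReal l2).ennreal_ofReal) hmeas]
  have hpt : ∀ y : ℝ, (exponentialPDF l2 * fun y => expMeasure l1 ((fun x => (x, y)) ⁻¹' S)) y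
      = (Icc 0 (α * σ2)).indicator
          (fun y => ENNReal.ofReal (l2 * rexp (-(l2 * y)) * rexp (-(l1 * (α * (y + σ2)))))) y := by
    intro y
    simp only [Pi.mul_apply]
    rcases lt_or_ge y 0 with hy | hy
    · rw [exponentialPDF_of_neg hy, zero_mul,
        Set.indicator_of_notMem (fun h => absurd h.1 (not_le.2 hy))]
    rcases le_or_gt y (α * σ2) with hy2 | hy2
    · have hsec : (fun x => (x, y)) ⁻¹' S = Set.Ioi (α * (y + σ2)) := by
        ext x
        simp only [hSdef, Set.mem_preimage, Set.mem_setOf_eq, Set.mem_Ioi]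
        constructor
        · rintro ⟨_, h2, _⟩; exact h2
        · intro h
          have hy3 : y ≤ α * (y + σ2) := by nlinarith [mul_nonneg hα.le hy]
          exact ⟨le_trans hy3 h.le, h, hy2⟩
      rw [hsec, expMeasure_Ioi hl1 (by positivity), exponentialPDF_of_nonneg hy,
        Set.indicator_of_mem (Set.mem_Icc.mpr ⟨hy, hy2⟩), ← ENNReal.ofReal_mul (by positivity)]
    · have hsec : (fun x => (x, y)) ⁻¹' S = ∅ := by
        ext x
        simp only [hSdef, Set.mem_preimage, Set.mem_setOf_eq, Set.mem_empty_iff_false, iff_false]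
        rintro ⟨_, _, h3⟩; exact absurd h3 (not_le.2 hy2)
      rw [hsec, measure_empty, mul_zero,
        Set.indicator_of_notMem (fun h => absurd h.2 (not_le.2 hy2))]
  rw [lintegral_congr hpt, lintegral_indicator measurableSet_Icc _]
  have hcont : Continuous fun y : ℝ => l2 * rexp (-(l2 * y)) * rexp (-(l1 * (α * (y + σ2)))) := by
    fun_prop
  rw [← ofReal_integral_eq_lintegral_ofReal
    (hcont.integrableOn_Icc)
    (Filter.Eventually.of_forall (fun y => by positivity))]
  congr 1
  rw [MeasureTheory.integral_Icc_eq_integral_Ioc,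
    ← intervalIntegral.integral_of_le (by positivity : (0:ℝ) ≤ α * σ2)]
  have heq : ∀ y : ℝ, l2 * rexp (-(l2 * y)) * rexp (-(l1 * (α * (y + σ2))))
      = (l2 * rexp (-(α * σ2 * l1))) * rexp (-((l2 + α * l1) * y)) := by
    intro y
    rw [mul_assoc, mul_assoc, ← Real.exp_add, ← Real.exp_add]
    ring_nf
  simp_rw [heq]
  rw [intervalIntegral.integral_const_mul, integral_exp_neg_mul hc]
  rw [show (l2 + α * l1) * (α * σ2) = α * σ2 * (l2 + α * l1) by ring]
  field_simp
end
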